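/- arXiv:2409.17184 — 7 statements merged into one kernel-verified Lean document; each statement's English description precedes it below -/
import Mathlib

section
/- If (V, l, r) is a representation of an anti-Leibniz algebra (A, {·,·}), then (V*, l*, l* - r*) is a representation of A, where l*, r*: A → End(V*) are defined by ⟨l*(x)ξ, v⟩ = ⟨ξ, l(x)v⟩ and ⟨r*(x)ξ, v⟩ = ⟨ξ, r(x)v⟩. -/
theorem stmt_10 (K : Type*) [Field K] [CharZero K]
    (A : Type*) [AddCommGroup A] [Module K A]
    (V : Type*) [AddCommGroup V] [Module K V]
    (b : A →ₗ[K] A →ₗ[K] A)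
    (hleib : ∀ x y z : A, b x (b y z) = -(b (b x y) z) - b y (b x z))
    (l r : A →ₗ[K] Module.End K V)
    (h1 : ∀ x y : A, l (b x y) = -(l x * l y) - l y * l x)
    (h2 : ∀ x y : A, r (b x y) = -(l x * r y) - r y * l x)
    (h3 : ∀ x y : A, r y * l x = r y * r x)
    (L R : A → Module.Dual K V →ₗ[K] Module.Dual K V)
    (hL : L = fun x => (l x).dualMap)
    (hR : R = fun x => (l x).dualMap - (r x).dualMap) :
    (∀ (x y : A) (ξ : Module.Dual K V),
        L (b x y) ξ = -(L x (L y ξ)) - L y (L x ξ)) ∧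
    (∀ (x y : A) (ξ : Module.Dual K V),
        R (b x y) ξ = -(L x (R y ξ)) - R y (L x ξ)) ∧
    (∀ (x y : A) (ξ : Module.Dual K V),
        R y (L x ξ) = R y (R x ξ)) := by
  subst hL hR
  refine ⟨?_, ?_, ?_⟩ <;> intro x y ξ <;> ext v
  · have h := congrArg (fun f : Module.End K V => ξ (f v)) (h1 x y)
    simp only [Module.End.mul_apply, LinearMap.sub_apply, LinearMap.neg_apply, map_sub, map_neg] at h
    simp only [LinearMap.dualMap_apply, LinearMap.neg_apply, LinearMap.sub_apply]
    linear_combination h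
  · have ha := congrArg (fun f : Module.End K V => ξ (f v)) (h1 x y)
    have hb := congrArg (fun f : Module.End K V => ξ (f v)) (h2 x y)
    simp only [Module.End.mul_apply, LinearMap.sub_apply, LinearMap.neg_apply, map_sub, map_neg] at ha hb ⊢
    simp only [LinearMap.dualMap_apply, LinearMap.sub_apply, LinearMap.neg_apply, map_sub, map_neg]
    linear_combination ha - hb
  · have hc := congrArg (fun f : Module.End K V => ξ (f v)) (h3 y x)
    have hd := congrArg (fun f : Module.End K V => ξ (f v)) (h3 x y)
    simp only [Module.End.mul_apply] at hc hd
    simp only [LinearMap.dualMap_apply, LinearMap.sub_apply, map_sub]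
    linear_combination hc
end

section
/- Given a mock-Lie algebra (A, ∘) with representation (V, π), the product {x+u, y+v} = x∘y + π(x)v on A ⊕ V makes A ⊕ V an anti-Leibniz algebra (the hemisemi-direct product). -/
theorem stmt_13 (K : Type*) [Field K] [CharZero K]
    (A : Type*) [AddCommGroup A] [Module K A]
    (V : Type*) [AddCommGroup V] [Module K V]
    (mul : A →ₗ[K] A →ₗ[K] A)
    (comm : ∀ x y : A, mul x y = mul y x)
    (jacobi : ∀ x y z : A, mul x (mul y z) + mul y (mul z x) + mul z (mul x y) = 0)
    (π : A →ₗ[K] Module.End K V)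
    (hrep : ∀ x y : A, π (mul x y) = -(π x * π y) - π y * π x)
    (P : A × V → A × V → A × V)
    (hP : P = fun p q => (mul p.1 q.1, π p.1 q.2)) :
    ∀ p q s : A × V, P p (P q s) = -(P (P p q) s) - P q (P p s) := by
  subst hP
  intro p q s
  refine Prod.ext ?_ ?_
  · show mul p.1 (mul q.1 s.1) = -(mul (mul p.1 q.1) s.1) - mul q.1 (mul p.1 s.1)
    have h := jacobi p.1 q.1 s.1
    rw [comm s.1 p.1, comm s.1 (mul p.1 q.1)] at h
    have h2 : mul p.1 (mul q.1 s.1)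
        = -(mul q.1 (mul p.1 s.1) + mul (mul p.1 q.1) s.1) :=
      eq_neg_of_add_eq_zero_left (by rw [← add_assoc]; exact h)
    rw [h2]; abel
  · show π p.1 (π q.1 s.2) = -(π (mul p.1 q.1) s.2) - π q.1 (π p.1 s.2)
    rw [hrep]
    simp [Module.End.mul_apply]
end

section
/- A linear map K: V → A is an embedding tensor on a mock-Lie algebra (A, ∘) with representation (V, π) if and only if the map N_K: A ⊕ V → A ⊕ V, (x, u) ↦ (K(u), 0), is a Nijenhuis operator on the hemisemi-direct product anti-Leibniz algebra A ⊕ V with product {x+u, y+v} = x∘y + π(x)v. -/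
theorem stmt_14 (K : Type*) [Field K] [CharZero K]
    (A : Type*) [AddCommGroup A] [Module K A]
    (V : Type*) [AddCommGroup V] [Module K V]
    (mul : A →ₗ[K] A →ₗ[K] A)
    (comm : ∀ x y : A, mul x y = mul y x)
    (jacobi : ∀ x y z : A, mul x (mul y z) + mul y (mul z x) + mul z (mul x y) = 0)
    (π : A →ₗ[K] Module.End K V)
    (hrep : ∀ x y : A, π (mul x y) = -(π x * π y) - π y * π x)
    (T : V →ₗ[K] A)
    (P : A × V → A × V → A × V)
    (hP : P = fun p q => (mul p.1 q.1, π p.1 q.2))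
    (N : A × V → A × V)
    (hN : N = fun p => (T p.2, 0)) :
    (∀ u v : V, mul (T u) (T v) = T (π (T u) v)) ↔
    (∀ p q : A × V, P (N p) (N q) = N (P (N p) q + P p (N q) - N (P p q))) := by
  subst hP hN
  simp only [Prod.mk.injEq, Prod.ext_iff, Prod.snd_add, Prod.snd_sub, Prod.fst_add,
    Prod.fst_sub, map_zero, LinearMap.zero_apply]
  constructor
  · intro h p q
    constructor
    · simpa using h p.2 q.2
    · simp
  · intro h u v
    simpa using (h (0, u) (0, v)).1
end

section
/- If K: V → A is an embedding tensor on a mock-Lie algebra (A, ∘) with representation (V, π), then the bracket {u,v}_K := π(K(u))v makes V an anti-Leibniz algebra. -/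
theorem stmt_15 (K : Type*) [Field K] [CharZero K]
    (A : Type*) [AddCommGroup A] [Module K A]
    (V : Type*) [AddCommGroup V] [Module K V]
    (mul : A →ₗ[K] A →ₗ[K] A)
    (comm : ∀ x y : A, mul x y = mul y x)
    (jacobi : ∀ x y z : A, mul x (mul y z) + mul y (mul z x) + mul z (mul x y) = 0)
    (π : A →ₗ[K] Module.End K V)
    (hrep : ∀ x y : A, π (mul x y) = -(π x * π y) - π y * π x)
    (T : V →ₗ[K] A)
    (hT : ∀ u v : V, mul (T u) (T v) = T (π (T u) v))
    (br : V → V → V) (hbr : br = fun u v => π (T u) v) :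
    ∀ u v w : V, br u (br v w) = -(br (br u v) w) - br v (br u w) := by
  subst hbr
  intro u v w
  simp only
  have h : T (π (T u) v) = mul (T u) (T v) := (hT u v).symm
  rw [h, hrep]
  simp [Module.End.mul_apply]
end

section
/- If (V, ρ, μ) is a representation of an anti-associative algebra (A, ⋆), then π := ρ + μ is a representation of the induced mock-Lie algebra (A, ∘) with x∘y = x⋆y + y⋆x, i.e. π(x∘y) = -π(x)π(y) - π(y)π(x). Moreover, any embedding tensor K: V → A for (A, ⋆, ρ, μ) is also an embedding tensor for (A, ∘, π). -/
theorem stmt_16 (K : Type*) [Field K] [CharZero K]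
    (A : Type*) [AddCommGroup A] [Module K A]
    (V : Type*) [AddCommGroup V] [Module K V]
    (star : A →ₗ[K] A →ₗ[K] A)
    (antiassoc : ∀ x y z : A, star (star x y) z + star x (star y z) = 0)
    (ρ μ : A →ₗ[K] Module.End K V)
    (h1 : ∀ x y : A, ρ x * ρ y = -(ρ (star x y)))
    (h2 : ∀ x y : A, μ y * μ x = -(μ (star x y)))
    (h3 : ∀ x y : A, μ x * ρ y = -(ρ y * μ x))
    (o : A → A → A) (ho : o = fun x y => star x y + star y x)
    (π : A → Module.End K V) (hπ : π = fun x => ρ x + μ x)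
    (T : V →ₗ[K] A)
    (hT : ∀ u v : V, star (T u) (T v) = T (ρ (T u) v) ∧ star (T u) (T v) = T (μ (T v) u)) :
    (∀ x y : A, π (o x y) = -(π x * π y) - π y * π x) ∧
    (∀ u v : V, o (T u) (T v) = T (π (T u) v)) := by
  subst ho hπ
  constructor
  · intro x y
    simp only [map_add, mul_add, add_mul]
    have e1 := h1 x y
    have e2 := h1 y x
    have e3 := h2 x y
    have e4 := h2 y x
    have e5 := h3 x y
    have e6 := h3 y x
    abel_nf
    rw [e1, e2, e3, e4, e5, e6]
    abel
  · intro u v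
    have h1' := (hT u v).1
    have h2' := (hT v u).2
    simp only [map_add]
    rw [h1', h2']
    simp [LinearMap.add_apply]
end

section
/- If K: V → A is an embedding tensor on an anti-associative algebra (A, ⋆) with representation (V, ρ, μ), then the products u▷v := ρ(K(u))v and u◁v := μ(K(v))u make V an anti-associative dialgebra. -/
theorem stmt_17 (K : Type*) [Field K] [CharZero K]
    (A : Type*) [AddCommGroup A] [Module K A]
    (V : Type*) [AddCommGroup V] [Module K V]
    (star : A →ₗ[K] A →ₗ[K] A)
    (antiassoc : ∀ x y z : A, star (star x y) z + star x (star y z) = 0)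
    (ρ μ : A →ₗ[K] Module.End K V)
    (h1 : ∀ x y : A, ρ x * ρ y = -(ρ (star x y)))
    (h2 : ∀ x y : A, μ y * μ x = -(μ (star x y)))
    (h3 : ∀ x y : A, μ x * ρ y = -(ρ y * μ x))
    (T : V →ₗ[K] A)
    (hT : ∀ u v : V, star (T u) (T v) = T (ρ (T u) v) ∧ star (T u) (T v) = T (μ (T v) u))
    (r l : V → V → V)
    (hr : r = fun u v => ρ (T u) v) (hl : l = fun u v => μ (T v) u) :
    (∀ u v w : V, l (l u v) w + l u (l v w) = 0) ∧
    (∀ u v w : V, r (r u v) w + r u (r v w) = 0) ∧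
    (∀ u v w : V, l (r u v) w + r u (l v w) = 0) := by
  subst hr hl
  refine ⟨fun u v w => ?_, fun u v w => ?_, fun u v w => ?_⟩
  · have h := LinearMap.congr_fun (h2 (T v) (T w)) u
    simp only [Module.End.mul_apply, LinearMap.neg_apply] at h
    simp only [← (hT v w).2, h]
    abel
  · have h := LinearMap.congr_fun (h1 (T u) (T v)) w
    simp only [Module.End.mul_apply, LinearMap.neg_apply] at h
    simp only [← (hT u v).1, h]
    abel
  · have h := LinearMap.congr_fun (h3 (T w) (T u)) v
    simp only [Module.End.mul_apply, LinearMap.neg_apply] at h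
    simp only [h]
    abel
end

section
/- Let H: B → A be a homomorphic embedding tensor on a mock-Lie algebra (A, ∘_A) acting on a mock-Lie algebra (B, ∘_B) via π. Then (B, {·,·}_H, ∘_B) with {a,b}_H := π(H(a))b is an anti-Leibniz trialgebra: (B, {·,·}_H) is anti-Leibniz, and {a, b∘_B c}_H + b∘_B {a,c}_H + c∘_B {a,b}_H = 0 and {a∘_B b, c}_H = {{a,b}_H, c}_H hold. -/
theorem stmt_18 (K : Type*) [Field K] [CharZero K]
    (A : Type*) [AddCommGroup A] [Module K A]
    (B : Type*) [AddCommGroup B] [Module K B]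
    (mulA : A →ₗ[K] A →ₗ[K] A)
    (commA : ∀ x y : A, mulA x y = mulA y x)
    (jacobiA : ∀ x y z : A, mulA x (mulA y z) + mulA y (mulA z x) + mulA z (mulA x y) = 0)
    (mulB : B →ₗ[K] B →ₗ[K] B)
    (commB : ∀ a b : B, mulB a b = mulB b a)
    (jacobiB : ∀ a b c : B, mulB a (mulB b c) + mulB b (mulB c a) + mulB c (mulB a b) = 0)
    (π : A →ₗ[K] Module.End K B)
    (hrep : ∀ x y : A, π (mulA x y) = -(π x * π y) - π y * π x)
    (hact : ∀ (x : A) (a b : B), π x (mulB a b) + mulB a (π x b) + mulB b (π x a) = 0)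
    (H : B →ₗ[K] A)
    (hemb : ∀ a b : B, mulA (H a) (H b) = H (π (H a) b))
    (hmor : ∀ a b : B, H (mulB a b) = mulA (H a) (H b))
    (br : B → B → B) (hbr : br = fun a b => π (H a) b) :
    (∀ a b c : B, br a (br b c) = -(br (br a b) c) - br b (br a c)) ∧
    (∀ a b c : B, br a (mulB b c) + mulB b (br a c) + mulB c (br a b) = 0) ∧
    (∀ a b c : B, br (mulB a b) c = br (br a b) c) := by
  subst hbr
  refine ⟨?_, ?_, ?_⟩
  · intro a b c
    have h1 : π (H (π (H a) b)) = -(π (H a) * π (H b)) - π (H b) * π (H a) := by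
      rw [← hemb, hrep]
    simp only []
    rw [h1]
    simp [Module.End.mul_apply]
  · intro a b c
    exact hact (H a) b c
  · intro a b c
    simp only []
    rw [hmor, hemb]
end
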